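/- Let τ_{i,0}, τ_{i,1} satisfy 1 ≥ τ_{i,0} ≥ τ_{i,1} ≥ 0 for i = 1..n with n ≥ 2. Then the restricted maximal chain score Ŝ*_{n-Chain} = sqrt(∏_{i=1}^n τ_{i,0} + ∏_{i=1}^n τ_{i,1}) is at most the unrestricted maximal chain score S*_{n-Chain} = ((τ_{1,0}² + τ_{1,1}²)(τ_{n,0}² + τ_{n,1}²))^{1/4} · ∏_{i=2}^{n−1} √(τ_{i,0}). -/

import Mathlib

open Finset

theorem restricted_chain_score_le_unrestricted (n : ℕ) (hn : 2 ≤ n)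
    (τ : Fin n → Fin 2 → ℝ)
    (h1 : ∀ i, τ i 0 ≤ 1) (h2 : ∀ i, τ i 1 ≤ τ i 0) (h3 : ∀ i, 0 ≤ τ i 1) :
    Real.sqrt (∏ i, τ i 0 + ∏ i, τ i 1) ≤
      (((τ ⟨0, by omega⟩ 0) ^ 2 + (τ ⟨0, by omega⟩ 1) ^ 2) *
          ((τ ⟨n - 1, by omega⟩ 0) ^ 2 + (τ ⟨n - 1, by omega⟩ 1) ^ 2)) ^ ((1 : ℝ) / 4) *
        ∏ i ∈ Finset.univ.filter (fun i : Fin n => 1 ≤ (i : ℕ) ∧ (i : ℕ) < n - 1),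
          Real.sqrt (τ i 0) := by
  have h0lt : 0 < n := by omega
  have hlast : n - 1 < n := by omega
  set S := Finset.univ.filter (fun i : Fin n => 1 ≤ (i : ℕ) ∧ (i : ℕ) < n - 1) with hSdef
  have hτ0 : ∀ i, 0 ≤ τ i 0 := fun i => (h3 i).trans (h2 i)
  set a0 := τ ⟨0, h0lt⟩ 0
  set a1 := τ ⟨0, h0lt⟩ 1
  set b0 := τ ⟨n - 1, hlast⟩ 0
  set b1 := τ ⟨n - 1, hlast⟩ 1
  -- split products
  have hsplit : ∀ f : Fin n → ℝ,
      ∏ i, f i = f ⟨0, h0lt⟩ * f ⟨n - 1, hlast⟩ * ∏ i ∈ S, f i := by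
    intro f
    have hne2 : (⟨n - 1, hlast⟩ : Fin n) ∉ S := by
      simp [hSdef]
    have hne : (⟨0, h0lt⟩ : Fin n) ∉ insert (⟨n - 1, hlast⟩ : Fin n) S := by
      simp [hSdef, Fin.ext_iff]
      omega
    have huniv : (univ : Finset (Fin n)) = insert ⟨0, h0lt⟩ (insert ⟨n - 1, hlast⟩ S) := by
      ext i
      simp [hSdef, Fin.ext_iff]
      omega
    rw [huniv, Finset.prod_insert hne, Finset.prod_insert hne2, mul_assoc]
  set Q := ∏ i ∈ S, τ i 0 with hQdef
  have hQ0 : 0 ≤ Q := Finset.prod_nonneg fun i _ => hτ0 i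
  set X := (a0 ^ 2 + a1 ^ 2) * (b0 ^ 2 + b1 ^ 2) with hXdef
  have hX0 : 0 ≤ X := mul_nonneg (by positivity) (by positivity)
  -- product of sqrts
  have hsqrtQ : ∏ i ∈ S, Real.sqrt (τ i 0) = Real.sqrt Q := by
    rw [hQdef]
    induction S using Finset.induction with
    | empty => simp
    | insert _ _ hx ih => rw [Finset.prod_insert hx, Finset.prod_insert hx, ih,
        Real.sqrt_mul (hτ0 _)]
  -- rpow: X^(1/4) = sqrt (sqrt X)
  have hrpow : X ^ ((1 : ℝ) / 4) = Real.sqrt (Real.sqrt X) := by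
    rw [Real.sqrt_eq_rpow, Real.sqrt_eq_rpow, ← Real.rpow_mul hX0]
    norm_num
  have hP1 : ∏ i, τ i 1 ≤ a1 * b1 * Q := by
    rw [hsplit (fun i => τ i 1)]
    refine mul_le_mul_of_nonneg_left ?_ (mul_nonneg (h3 _) (h3 _))
    exact Finset.prod_le_prod (fun i _ => h3 i) (fun i _ => h2 i)
  have hP0 : ∏ i, τ i 0 = a0 * b0 * Q := hsplit (fun i => τ i 0)
  have hcs : a0 * b0 + a1 * b1 ≤ Real.sqrt X := by
    have h01 : 0 ≤ a0 * b0 + a1 * b1 := by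
      have := h3 ⟨0, h0lt⟩; have := h3 ⟨n-1, hlast⟩
      have := hτ0 ⟨0, h0lt⟩; have := hτ0 ⟨n-1, hlast⟩
      positivity
    rw [Real.le_sqrt h01 hX0]
    nlinarith [sq_nonneg (a0 * b1 - a1 * b0)]
  calc Real.sqrt (∏ i, τ i 0 + ∏ i, τ i 1)
      ≤ Real.sqrt (Real.sqrt X * Q) := by
        apply Real.sqrt_le_sqrt
        rw [hP0]
        calc a0 * b0 * Q + ∏ i, τ i 1 ≤ a0 * b0 * Q + a1 * b1 * Q := by linarith
          _ = (a0 * b0 + a1 * b1) * Q := by ring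
          _ ≤ Real.sqrt X * Q := mul_le_mul_of_nonneg_right hcs hQ0
    _ = X ^ ((1 : ℝ) / 4) * ∏ i ∈ S, Real.sqrt (τ i 0) := by
        rw [hsqrtQ, hrpow, Real.sqrt_mul (Real.sqrt_nonneg X)]
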